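/- arXiv:2207.06005 — 3 statements merged into one kernel-verified Lean document; each statement's English description precedes it below -/
import Mathlib

section
/- Let q ≥ 0 be an integer. If two groups G and H are q-isoclinic, then B₀^q(G) ≅ B₀^q(H); i.e. the q-Bogomolov multiplier is invariant under q-isoclinism. -/
/-!
Nonabelian tensor square modulo `q` (Conduché–Ellis / Brown–Loday for `q = 0`),
presented by generators `g ⊗ h` and `{(g,g)}` with the defining relations.
-/

namespace QTensor

/-- Generators of the `q`-tensor square: `t g h` stands for `g ⊗ h`,
and `d g` stands for the symbol `{(g,g)}`. -/
inductive Gen (G : Type) : Type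
  | t : G → G → Gen G
  | d : G → Gen G

variable (G : Type) [Group G]

/-- The word `g ⊗ h` in the free group on the generators. -/
def T (g h : G) : FreeGroup (Gen G) := FreeGroup.of (Gen.t g h)

/-- The word `{(g,g)}` in the free group on the generators. -/
def D (g : G) : FreeGroup (Gen G) := FreeGroup.of (Gen.d g)

/-- The word `∏_{i=1}^{q-1} (g⁻¹ ⊗ (^(g^(1-q+i)) g₁)^i)` appearing in relation (4). -/
def relProd (q : ℕ) (g g₁ : G) : FreeGroup (Gen G) :=
  ((List.range (q - 1)).map (fun j =>
    T G g⁻¹ ((g ^ ((1 : ℤ) - (q : ℤ) + (j + 1 : ℕ)) * g₁ *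
      (g ^ ((1 : ℤ) - (q : ℤ) + (j + 1 : ℕ)))⁻¹) ^ (j + 1)))).prod

/-- The defining relations of the `q`-tensor square.  For `q = 0` the symbols
`{(g,g)}` are killed, so that the group is the Brown–Loday nonabelian tensor
square generated by the `g ⊗ h` subject to relations (1) and (2). -/
def rels (q : ℕ) : Set (FreeGroup (Gen G)) :=
  {r | ∃ g g₁ h : G,
      r = T G (g * g₁) h * (T G (g * g₁ * g⁻¹) (g * h * g⁻¹) * T G g h)⁻¹} ∪
  {r | ∃ g h h₁ : G,
      r = T G g (h * h₁) * (T G g h * T G (h * g * h⁻¹) (h * h₁ * h⁻¹))⁻¹} ∪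
  {r | ∃ g g₁ h₁ : G,
      r = D G g * T G g₁ h₁ * (D G g)⁻¹ *
        (T G (g ^ q * g₁ * (g ^ q)⁻¹) (g ^ q * h₁ * (g ^ q)⁻¹))⁻¹} ∪
  {r | ∃ g g₁ : G,
      r = D G (g * g₁) * (D G g * relProd G q g g₁ * D G g₁)⁻¹} ∪
  {r | ∃ g g₁ : G,
      r = D G g * D G g₁ * (D G g)⁻¹ * (D G g₁)⁻¹ * (T G (g ^ q) (g₁ ^ q))⁻¹} ∪
  {r | ∃ g h : G,
      r = D G (g * h * g⁻¹ * h⁻¹) * ((T G g h) ^ q)⁻¹} ∪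
  {r | q = 0 ∧ ∃ g : G, r = D G g}

/-- The nonabelian tensor square modulo `q`, `G ⊗^q G`. -/
def tensorSquare (q : ℕ) : Type := PresentedGroup (rels G q)

instance (q : ℕ) : Group (tensorSquare G q) := by unfold tensorSquare; infer_instance

/-- The element `g ⊗ h` of `G ⊗^q G`. -/
def tmk (q : ℕ) (g h : G) : tensorSquare G q := PresentedGroup.of (Gen.t g h)

/-- The element `{(g,g)}` of `G ⊗^q G`. -/
def dmk (q : ℕ) (g : G) : tensorSquare G q := PresentedGroup.of (Gen.d g)

/-- `∇^q(G)`, the normal closure of the elements `g ⊗ g` in `G ⊗^q G`. -/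
def nabla (q : ℕ) : Subgroup (tensorSquare G q) :=
  Subgroup.normalClosure {x | ∃ g : G, x = tmk G q g g}

instance (q : ℕ) : (nabla G q).Normal := Subgroup.normalClosure_normal

/-- The exterior square modulo `q`, `G ∧^q G = (G ⊗^q G)/∇^q(G)`. -/
def extSquare (q : ℕ) : Type := tensorSquare G q ⧸ nabla G q

instance (q : ℕ) : Group (extSquare G q) := by unfold extSquare; infer_instance

/-- The element `g ∧ h` of `G ∧^q G`. -/
def wmk (q : ℕ) (g h : G) : extSquare G q := QuotientGroup.mk (tmk G q g h)

/-- The image of the symbol `{(g,g)}` in `G ∧^q G`. -/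
def dwmk (q : ℕ) (g : G) : extSquare G q := QuotientGroup.mk (dmk G q g)

/-- The exterior centre variant `Z^∧_q(G) = {g : g ∧ h = 1 for all h}` (as a set). -/
def Zext (q : ℕ) : Set G := {g | ∀ h : G, wmk G q g h = 1}

/-- `E^∧_q(G) = {g ∈ Z^∧_q(G) : {(g,g)} = 1 in G ∧^q G}` (as a set); for `q = 0`
the second condition is automatic, so `E^∧_0(G) = Z^∧(G)`. -/
def Eext (q : ℕ) : Set G := {g | (∀ h : G, wmk G q g h = 1) ∧ dwmk G q g = 1}

/-- The subgroup `G^q[G,G]` generated by all `q`-th powers and all commutators. -/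
def qPowComm (q : ℕ) : Subgroup G :=
  Subgroup.closure ({x | ∃ g : G, x = g ^ q} ∪ {x | ∃ a b : G, x = a * b * a⁻¹ * b⁻¹})

theorem pow_mem_qPowComm (q : ℕ) (g : G) : g ^ q ∈ qPowComm G q :=
  Subgroup.subset_closure (Or.inl ⟨g, rfl⟩)

theorem commutator_mem_qPowComm (q : ℕ) (a b : G) :
    a * b * a⁻¹ * b⁻¹ ∈ qPowComm G q :=
  Subgroup.subset_closure (Or.inr ⟨a, b, rfl⟩)

open scoped commutatorElement in
theorem mem_commutator (a b : G) : ⁅a, b⁆ ∈ commutator G :=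
  Subgroup.commutator_mem_commutator (Subgroup.mem_top a) (Subgroup.mem_top b)

/-- `M₀^q(G)`: the subgroup of `G ∧^q G` generated by the `x ∧ y` with `[x,y] = 1`.
(It is contained in the `q`-Schur multiplier `M^q(G)`.) -/
def M0 (q : ℕ) : Subgroup (extSquare G q) :=
  Subgroup.closure {x | ∃ a b : G, a * b = b * a ∧ x = wmk G q a b}

/-- `M̂₀^q(G)`: the subgroup of `G ∧^q G` generated by the `x ∧ y` with `[x,y] = 1`
together with the `{(g,g)}` with `g^q = 1`. -/
def M0hat (q : ℕ) : Subgroup (extSquare G q) :=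
  Subgroup.closure
    ({x | ∃ a b : G, a * b = b * a ∧ x = wmk G q a b} ∪
     {x | ∃ g : G, g ^ q = 1 ∧ x = dwmk G q g})

/-- A group `Q` is capable if `Q ≅ E/Z(E)` for some group `E`. -/
def Capable (Q : Type) [Group Q] : Prop :=
  ∃ (E : Type) (_ : Group E), Nonempty (Q ≃* E ⧸ Subgroup.center E)

end QTensor


namespace QTensor
variable {G : Type} [Group G] {q : ℕ}

/-- The canonical projection from the free group to the tensor square. -/
def pmk (G : Type) [Group G] (q : ℕ) : FreeGroup (Gen G) →* tensorSquare G q :=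
  QuotientGroup.mk' (Subgroup.normalClosure (rels G q))

lemma pmk_rel {r : FreeGroup (Gen G)} (h : r ∈ rels G q) : pmk G q r = 1 :=
  (QuotientGroup.eq_one_iff r).mpr (Subgroup.subset_normalClosure h)

lemma tmk_def (g h : G) : tmk G q g h = pmk G q (T G g h) := rfl
lemma dmk_def (g : G) : dmk G q g = pmk G q (D G g) := rfl

lemma eq_of_rel {a b : FreeGroup (Gen G)} (h : a * b⁻¹ ∈ rels G q) :
    pmk G q a = pmk G q b := by
  have := pmk_rel h
  rw [map_mul, map_inv, mul_inv_eq_one] at this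
  exact this

lemma rel1 (g g₁ h : G) :
    tmk G q (g * g₁) h = tmk G q (g * g₁ * g⁻¹) (g * h * g⁻¹) * tmk G q g h := by
  have hmem : T G (g * g₁) h * (T G (g * g₁ * g⁻¹) (g * h * g⁻¹) * T G g h)⁻¹
      ∈ rels G q :=
    Or.inl (Or.inl (Or.inl (Or.inl (Or.inl (Or.inl ⟨g, g₁, h, rfl⟩)))))
  simpa [tmk_def, map_mul] using eq_of_rel hmem

lemma rel2 (g h h₁ : G) :
    tmk G q g (h * h₁) = tmk G q g h * tmk G q (h * g * h⁻¹) (h * h₁ * h⁻¹) := by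
  have hmem : T G g (h * h₁) * (T G g h * T G (h * g * h⁻¹) (h * h₁ * h⁻¹))⁻¹
      ∈ rels G q :=
    Or.inl (Or.inl (Or.inl (Or.inl (Or.inl (Or.inr ⟨g, h, h₁, rfl⟩)))))
  simpa [tmk_def, map_mul] using eq_of_rel hmem

lemma rel3 (g g₁ h₁ : G) :
    dmk G q g * tmk G q g₁ h₁ * (dmk G q g)⁻¹ =
      tmk G q (g ^ q * g₁ * (g ^ q)⁻¹) (g ^ q * h₁ * (g ^ q)⁻¹) := by
  have hmem : D G g * T G g₁ h₁ * (D G g)⁻¹ *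
      (T G (g ^ q * g₁ * (g ^ q)⁻¹) (g ^ q * h₁ * (g ^ q)⁻¹))⁻¹ ∈ rels G q :=
    Or.inl (Or.inl (Or.inl (Or.inl (Or.inr ⟨g, g₁, h₁, rfl⟩))))
  simpa [tmk_def, dmk_def, map_mul] using eq_of_rel hmem

lemma rel4 (g g₁ : G) :
    dmk G q (g * g₁) = dmk G q g * pmk G q (relProd G q g g₁) * dmk G q g₁ := by
  have hmem : D G (g * g₁) * (D G g * relProd G q g g₁ * D G g₁)⁻¹ ∈ rels G q :=
    Or.inl (Or.inl (Or.inl (Or.inr ⟨g, g₁, rfl⟩)))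
  simpa [dmk_def, map_mul] using eq_of_rel hmem

lemma rel5 (g g₁ : G) :
    dmk G q g * dmk G q g₁ * (dmk G q g)⁻¹ * (dmk G q g₁)⁻¹ =
      tmk G q (g ^ q) (g₁ ^ q) := by
  have hmem : D G g * D G g₁ * (D G g)⁻¹ * (D G g₁)⁻¹ *
      (T G (g ^ q) (g₁ ^ q))⁻¹ ∈ rels G q :=
    Or.inl (Or.inl (Or.inr ⟨g, g₁, rfl⟩))
  simpa [tmk_def, dmk_def, map_mul] using eq_of_rel hmem

lemma rel6 (g h : G) :
    dmk G q (g * h * g⁻¹ * h⁻¹) = (tmk G q g h) ^ q := by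
  have hmem : D G (g * h * g⁻¹ * h⁻¹) * ((T G g h) ^ q)⁻¹ ∈ rels G q :=
    Or.inl (Or.inr ⟨g, h, rfl⟩)
  simpa [tmk_def, dmk_def, map_mul] using eq_of_rel hmem

lemma rel7 (hq : q = 0) (g : G) : dmk G q g = (1 : tensorSquare G q) := by
  have hmem : D G g ∈ rels G q := Or.inr ⟨hq, g, rfl⟩
  simpa [dmk_def] using pmk_rel hmem

end QTensor


namespace QTensor
variable {G : Type} [Group G] {q : ℕ}

lemma tmk_congr {a a' b b' : G} (ha : a = a') (hb : b = b') :
    tmk G q a b = tmk G q a' b' := by rw [ha, hb]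

lemma tmk_comm_aux (x y g h : G) :
    tmk G q ((x*y)*g*(x*y)⁻¹) ((x*y)*h*(x*y)⁻¹) * tmk G q x y
      = tmk G q x y * tmk G q ((y*x)*g*(y*x)⁻¹) ((y*x)*h*(y*x)⁻¹) := by
  have hA : tmk G q (x*g) (y*h)
      = tmk G q (x*g*x⁻¹) (x*y*x⁻¹) *
        (tmk G q ((x*y)*g*(x*y)⁻¹) ((x*y)*h*(x*y)⁻¹) *
          (tmk G q x y * tmk G q (y*x*y⁻¹) (y*h*y⁻¹))) := by
    calc tmk G q (x*g) (y*h)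
        = tmk G q (x*g*x⁻¹) (x*(y*h)*x⁻¹) * tmk G q x (y*h) := rel1 x g (y*h)
      _ = tmk G q (x*g*x⁻¹) ((x*y*x⁻¹)*(x*h*x⁻¹)) * (tmk G q x y * tmk G q (y*x*y⁻¹) (y*h*y⁻¹)) := by
          rw [tmk_congr (rfl : x*g*x⁻¹ = x*g*x⁻¹) (show x*(y*h)*x⁻¹ = (x*y*x⁻¹)*(x*h*x⁻¹) by group),
            rel2 x y h]
      _ = (tmk G q (x*g*x⁻¹) (x*y*x⁻¹) *
            tmk G q ((x*y*x⁻¹)*(x*g*x⁻¹)*(x*y*x⁻¹)⁻¹) ((x*y*x⁻¹)*(x*h*x⁻¹)*(x*y*x⁻¹)⁻¹)) *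
          (tmk G q x y * tmk G q (y*x*y⁻¹) (y*h*y⁻¹)) := by
          rw [← rel2 (x*g*x⁻¹) (x*y*x⁻¹) (x*h*x⁻¹)]
      _ = tmk G q (x*g*x⁻¹) (x*y*x⁻¹) *
          (tmk G q ((x*y)*g*(x*y)⁻¹) ((x*y)*h*(x*y)⁻¹) *
            (tmk G q x y * tmk G q (y*x*y⁻¹) (y*h*y⁻¹))) := by
          rw [tmk_congr (show (x*y*x⁻¹)*(x*g*x⁻¹)*(x*y*x⁻¹)⁻¹ = (x*y)*g*(x*y)⁻¹ by group)
            (show (x*y*x⁻¹)*(x*h*x⁻¹)*(x*y*x⁻¹)⁻¹ = (x*y)*h*(x*y)⁻¹ by group), mul_assoc]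
  have hB : tmk G q (x*g) (y*h)
      = tmk G q (x*g*x⁻¹) (x*y*x⁻¹) *
        (tmk G q x y *
          (tmk G q ((y*x)*g*(y*x)⁻¹) ((y*x)*h*(y*x)⁻¹) * tmk G q (y*x*y⁻¹) (y*h*y⁻¹))) := by
    calc tmk G q (x*g) (y*h)
        = tmk G q (x*g) y * tmk G q (y*(x*g)*y⁻¹) (y*h*y⁻¹) := rel2 (x*g) y h
      _ = (tmk G q (x*g*x⁻¹) (x*y*x⁻¹) * tmk G q x y) *
            tmk G q ((y*x*y⁻¹)*(y*g*y⁻¹)) (y*h*y⁻¹) := by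
          rw [← rel1 x g y,
            tmk_congr (show y*(x*g)*y⁻¹ = (y*x*y⁻¹)*(y*g*y⁻¹) by group) (rfl : y*h*y⁻¹ = y*h*y⁻¹)]
      _ = (tmk G q (x*g*x⁻¹) (x*y*x⁻¹) * tmk G q x y) *
            (tmk G q ((y*x*y⁻¹)*(y*g*y⁻¹)*(y*x*y⁻¹)⁻¹) ((y*x*y⁻¹)*(y*h*y⁻¹)*(y*x*y⁻¹)⁻¹) *
              tmk G q (y*x*y⁻¹) (y*h*y⁻¹)) := by
          rw [← rel1 (y*x*y⁻¹) (y*g*y⁻¹) (y*h*y⁻¹)]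
      _ = tmk G q (x*g*x⁻¹) (x*y*x⁻¹) *
          (tmk G q x y *
            (tmk G q ((y*x)*g*(y*x)⁻¹) ((y*x)*h*(y*x)⁻¹) * tmk G q (y*x*y⁻¹) (y*h*y⁻¹))) := by
          rw [tmk_congr (show (y*x*y⁻¹)*(y*g*y⁻¹)*(y*x*y⁻¹)⁻¹ = (y*x)*g*(y*x)⁻¹ by group)
            (show (y*x*y⁻¹)*(y*h*y⁻¹)*(y*x*y⁻¹)⁻¹ = (y*x)*h*(y*x)⁻¹ by group), mul_assoc]
  have key := mul_left_cancel (hA.symm.trans hB)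
  rw [← mul_assoc, ← mul_assoc] at key
  exact mul_right_cancel key

lemma tmk_conj (x y a b : G) :
    tmk G q x y * tmk G q a b =
      tmk G q ((x*y*x⁻¹*y⁻¹)*a*(x*y*x⁻¹*y⁻¹)⁻¹) ((x*y*x⁻¹*y⁻¹)*b*(x*y*x⁻¹*y⁻¹)⁻¹) *
        tmk G q x y := by
  have h := tmk_comm_aux (q := q) x y ((y*x)⁻¹*a*(y*x)) ((y*x)⁻¹*b*(y*x))
  rw [tmk_congr (show (x*y)*((y*x)⁻¹*a*(y*x))*(x*y)⁻¹
        = (x*y*x⁻¹*y⁻¹)*a*(x*y*x⁻¹*y⁻¹)⁻¹ by group)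
      (show (x*y)*((y*x)⁻¹*b*(y*x))*(x*y)⁻¹
        = (x*y*x⁻¹*y⁻¹)*b*(x*y*x⁻¹*y⁻¹)⁻¹ by group),
    tmk_congr (show (y*x)*((y*x)⁻¹*a*(y*x))*(y*x)⁻¹ = a by group)
      (show (y*x)*((y*x)⁻¹*b*(y*x))*(y*x)⁻¹ = b by group)] at h
  exact h.symm

/-- Projection from the tensor square to the exterior square. -/
def emk (G : Type) [Group G] (q : ℕ) : tensorSquare G q →* extSquare G q :=
  QuotientGroup.mk' (nabla G q)

lemma wmk_def (g h : G) : wmk G q g h = emk G q (tmk G q g h) := rfl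
lemma dwmk_def (g : G) : dwmk G q g = emk G q (dmk G q g) := rfl

lemma wmk_congr {a a' b b' : G} (ha : a = a') (hb : b = b') :
    wmk G q a b = wmk G q a' b' := by rw [ha, hb]

lemma dwmk_congr {a a' : G} (ha : a = a') : dwmk G q a = dwmk G q a' := by rw [ha]

lemma wrel1 (g g₁ h : G) :
    wmk G q (g * g₁) h = wmk G q (g * g₁ * g⁻¹) (g * h * g⁻¹) * wmk G q g h := by
  simp only [wmk_def, ← map_mul]; rw [rel1]

lemma wrel2 (g h h₁ : G) :
    wmk G q g (h * h₁) = wmk G q g h * wmk G q (h * g * h⁻¹) (h * h₁ * h⁻¹) := by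
  simp only [wmk_def, ← map_mul]; rw [rel2]

lemma wrel3 (g g₁ h₁ : G) :
    dwmk G q g * wmk G q g₁ h₁ * (dwmk G q g)⁻¹ =
      wmk G q (g ^ q * g₁ * (g ^ q)⁻¹) (g ^ q * h₁ * (g ^ q)⁻¹) := by
  simp only [wmk_def, dwmk_def, ← map_mul, ← map_inv]; rw [← rel3]

lemma wrel4 (g g₁ : G) :
    dwmk G q (g * g₁) =
      dwmk G q g * emk G q (pmk G q (relProd G q g g₁)) * dwmk G q g₁ := by
  simp only [wmk_def, dwmk_def, ← map_mul]; rw [rel4]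

lemma wrel5 (g g₁ : G) :
    dwmk G q g * dwmk G q g₁ * (dwmk G q g)⁻¹ * (dwmk G q g₁)⁻¹ =
      wmk G q (g ^ q) (g₁ ^ q) := by
  simp only [wmk_def, dwmk_def, ← map_mul, ← map_inv]; rw [← rel5]

lemma wrel6 (g h : G) :
    dwmk G q (g * h * g⁻¹ * h⁻¹) = (wmk G q g h) ^ q := by
  simp only [wmk_def, dwmk_def, ← map_pow]; rw [rel6]

lemma wrel7 (hq : q = 0) (g : G) : dwmk G q g = (1 : extSquare G q) := by
  rw [dwmk_def, rel7 hq, map_one]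

lemma wmk_diag (g : G) : wmk G q g g = (1 : extSquare G q) :=
  (QuotientGroup.eq_one_iff _).mpr (Subgroup.subset_normalClosure ⟨g, rfl⟩)

lemma wmk_conj (x y a b : G) :
    wmk G q x y * wmk G q a b =
      wmk G q ((x*y*x⁻¹*y⁻¹)*a*(x*y*x⁻¹*y⁻¹)⁻¹) ((x*y*x⁻¹*y⁻¹)*b*(x*y*x⁻¹*y⁻¹)⁻¹) *
        wmk G q x y := by
  simp only [wmk_def, ← map_mul]; rw [tmk_conj]

lemma wmk_mem_M0 {a b : G} (h : a * b = b * a) : wmk G q a b ∈ M0 G q :=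
  Subgroup.subset_closure ⟨a, b, h, rfl⟩

lemma closure_extSquare :
    Subgroup.closure ({x | ∃ g h : G, x = wmk G q g h} ∪ {x | ∃ g : G, x = dwmk G q g})
      = (⊤ : Subgroup (extSquare G q)) := by
  have hsurj : Function.Surjective ⇑((emk G q).comp (pmk G q)) :=
    (QuotientGroup.mk'_surjective (nabla G q)).comp (QuotientGroup.mk'_surjective _)
  have himg : (⇑((emk G q).comp (pmk G q)) '' Set.range (FreeGroup.of (α := Gen G)))
      = ({x | ∃ g h : G, x = wmk G q g h} ∪ {x | ∃ g : G, x = dwmk G q g}) := by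
    ext x
    constructor
    · rintro ⟨-, ⟨gen, rfl⟩, rfl⟩
      cases gen with
      | t g h => exact Or.inl ⟨g, h, rfl⟩
      | d g => exact Or.inr ⟨g, rfl⟩
    · rintro (⟨g, h, rfl⟩ | ⟨g, rfl⟩)
      · exact ⟨FreeGroup.of (Gen.t g h), ⟨_, rfl⟩, rfl⟩
      · exact ⟨FreeGroup.of (Gen.d g), ⟨_, rfl⟩, rfl⟩
  rw [← himg, ← MonoidHom.map_closure, FreeGroup.closure_range_of,
    Subgroup.map_top_of_surjective _ hsurj]

lemma conj_mem_M0 {u : extSquare G q}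
    (hu : ∀ a b : G, a * b = b * a → u * wmk G q a b * u⁻¹ ∈ M0 G q)
    {n : extSquare G q} (hn : n ∈ M0 G q) : u * n * u⁻¹ ∈ M0 G q := by
  have hle : M0 G q ≤ Subgroup.comap (MulAut.conj u).toMonoidHom (M0 G q) := by
    rw [M0]
    refine (Subgroup.closure_le _).mpr ?_
    rintro x ⟨a, b, hab, rfl⟩
    simpa [Subgroup.mem_comap, M0] using hu a b hab
  simpa using hle hn

lemma conj_comm_aux {a b c : G} (hab : a * b = b * a) :
    (c*a*c⁻¹) * (c*b*c⁻¹) = (c*b*c⁻¹) * (c*a*c⁻¹) := by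
  have h1 : (c*a*c⁻¹) * (c*b*c⁻¹) = c*(a*b)*c⁻¹ := by group
  have h2 : (c*b*c⁻¹) * (c*a*c⁻¹) = c*(b*a)*c⁻¹ := by group
  rw [h1, h2, hab]

lemma wmk_conj' (x y a b : G) :
    wmk G q x y * wmk G q a b * (wmk G q x y)⁻¹ =
      wmk G q ((x*y*x⁻¹*y⁻¹)*a*(x*y*x⁻¹*y⁻¹)⁻¹) ((x*y*x⁻¹*y⁻¹)*b*(x*y*x⁻¹*y⁻¹)⁻¹) := by
  rw [wmk_conj, mul_inv_cancel_right]

lemma inv_conj_helper {K : Type} [Group K] {u w w' : K}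
    (h : u * w' * u⁻¹ = w) : u⁻¹ * w * u = w' := by rw [← h]; group

lemma conj_comm_aux' {a b c : G} (hab : a * b = b * a) :
    (c⁻¹*a*c) * (c⁻¹*b*c) = (c⁻¹*b*c) * (c⁻¹*a*c) := by
  have h1 : (c⁻¹*a*c) * (c⁻¹*b*c) = c⁻¹*(a*b)*c := by group
  have h2 : (c⁻¹*b*c) * (c⁻¹*a*c) = c⁻¹*(b*a)*c := by group
  rw [h1, h2, hab]

lemma mem_normalizer_M0 (u : extSquare G q)
    (h1 : ∀ a b : G, a * b = b * a → u * wmk G q a b * u⁻¹ ∈ M0 G q)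
    (h2 : ∀ a b : G, a * b = b * a → u⁻¹ * wmk G q a b * u ∈ M0 G q) :
    u ∈ Subgroup.normalizer (M0 G q : Set (extSquare G q)) := by
  rw [Subgroup.mem_normalizer_iff]
  intro n
  constructor
  · exact fun hn => conj_mem_M0 h1 hn
  · intro hn
    have h2' : ∀ a b : G, a * b = b * a → u⁻¹ * wmk G q a b * (u⁻¹)⁻¹ ∈ M0 G q := by
      intro a b hab; rw [inv_inv]; exact h2 a b hab
    have := conj_mem_M0 h2' hn
    have e : u⁻¹ * (u * n * u⁻¹) * (u⁻¹)⁻¹ = n := by group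
    rwa [e] at this

instance M0_normal : (M0 G q).Normal := by
  rw [← Subgroup.normalizer_eq_top_iff, eq_top_iff, ← closure_extSquare]
  refine (Subgroup.closure_le _).mpr ?_
  rintro u (⟨x, y, rfl⟩ | ⟨x, rfl⟩) <;> rw [SetLike.mem_coe]
  · refine mem_normalizer_M0 _ (fun a b hab => ?_) (fun a b hab => ?_)
    · rw [wmk_conj']
      exact wmk_mem_M0 (conj_comm_aux hab)
    · set c := x*y*x⁻¹*y⁻¹ with hc
      have h : wmk G q x y * wmk G q (c⁻¹*a*c) (c⁻¹*b*c) * (wmk G q x y)⁻¹ =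
          wmk G q a b := by
        rw [wmk_conj',
          wmk_congr (show c*(c⁻¹*a*c)*c⁻¹ = a by group) (show c*(c⁻¹*b*c)*c⁻¹ = b by group)]
      rw [inv_conj_helper h]
      exact wmk_mem_M0 (conj_comm_aux' hab)
  · refine mem_normalizer_M0 _ (fun a b hab => ?_) (fun a b hab => ?_)
    · rw [wrel3]
      exact wmk_mem_M0 (conj_comm_aux hab)
    · have h : dwmk G q x * wmk G q ((x^q)⁻¹*a*(x^q)) ((x^q)⁻¹*b*(x^q)) * (dwmk G q x)⁻¹ =
          wmk G q a b := by
        rw [wrel3,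
          wmk_congr (show x^q*((x^q)⁻¹*a*(x^q))*(x^q)⁻¹ = a by group)
            (show x^q*((x^q)⁻¹*b*(x^q))*(x^q)⁻¹ = b by group)]
      rw [inv_conj_helper h]
      exact wmk_mem_M0 (conj_comm_aux' hab)

end QTensor


namespace QTensor
variable {G : Type} [Group G] {q : ℕ}

/-- The "curly" exterior square `(G ∧^q G) / M₀^q(G)`. -/
abbrev Cur (G : Type) [Group G] (q : ℕ) : Type := extSquare G q ⧸ M0 G q

/-- Projection to the curly exterior square. -/
def cmk (G : Type) [Group G] (q : ℕ) : extSquare G q →* Cur G q :=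
  QuotientGroup.mk' (M0 G q)

def cwmk (G : Type) [Group G] (q : ℕ) (g h : G) : Cur G q := cmk G q (wmk G q g h)
def cdmk (G : Type) [Group G] (q : ℕ) (g : G) : Cur G q := cmk G q (dwmk G q g)

lemma cwmk_congr {a a' b b' : G} (ha : a = a') (hb : b = b') :
    cwmk G q a b = cwmk G q a' b' := by rw [ha, hb]

lemma cdmk_congr' {a a' : G} (ha : a = a') : cdmk G q a = cdmk G q a' := by rw [ha]

lemma cwmk_comm {a b : G} (h : a * b = b * a) : cwmk G q a b = 1 :=
  (QuotientGroup.eq_one_iff _).mpr (wmk_mem_M0 h)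

lemma crel1 (g g₁ h : G) :
    cwmk G q (g * g₁) h = cwmk G q (g * g₁ * g⁻¹) (g * h * g⁻¹) * cwmk G q g h := by
  simp only [cwmk, ← map_mul]; rw [wrel1]

lemma crel2 (g h h₁ : G) :
    cwmk G q g (h * h₁) = cwmk G q g h * cwmk G q (h * g * h⁻¹) (h * h₁ * h⁻¹) := by
  simp only [cwmk, ← map_mul]; rw [wrel2]

lemma crel3 (g g₁ h₁ : G) :
    cdmk G q g * cwmk G q g₁ h₁ * (cdmk G q g)⁻¹ =
      cwmk G q (g ^ q * g₁ * (g ^ q)⁻¹) (g ^ q * h₁ * (g ^ q)⁻¹) := by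
  simp only [cwmk, cdmk, ← map_mul, ← map_inv]; rw [← wrel3]

lemma crel4 (g g₁ : G) :
    cdmk G q (g * g₁) =
      cdmk G q g * cmk G q (emk G q (pmk G q (relProd G q g g₁))) * cdmk G q g₁ := by
  simp only [cwmk, cdmk, ← map_mul]; rw [wrel4]

lemma crel5 (g g₁ : G) :
    cdmk G q g * cdmk G q g₁ * (cdmk G q g)⁻¹ * (cdmk G q g₁)⁻¹ =
      cwmk G q (g ^ q) (g₁ ^ q) := by
  simp only [cwmk, cdmk, ← map_mul, ← map_inv]; rw [← wrel5]

lemma crel6 (g h : G) :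
    cdmk G q (g * h * g⁻¹ * h⁻¹) = (cwmk G q g h) ^ q := by
  simp only [cwmk, cdmk, ← map_pow]; rw [wrel6]

lemma crel7 (hq : q = 0) (g : G) : cdmk G q g = (1 : Cur G q) := by
  rw [cdmk, wrel7 hq, map_one]

section Zq

variable {Zq : Subgroup G}
variable (hZq : (Zq : Set G) = {g | g ∈ Subgroup.center G ∧ dwmk G q g ∈ M0 G q})

include hZq in
lemma Zq_center {z : G} (hz : z ∈ Zq) : z ∈ Subgroup.center G := by
  have : z ∈ (Zq : Set G) := hz
  rw [hZq] at this
  exact this.1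

include hZq in
lemma Zq_cdmk {z : G} (hz : z ∈ Zq) : cdmk G q z = 1 := by
  have : z ∈ (Zq : Set G) := hz
  rw [hZq] at this
  exact (QuotientGroup.eq_one_iff _).mpr this.2

lemma cwmk_mul_center_right {z : G} (hz : z ∈ Subgroup.center G) (a b : G) :
    cwmk G q (a * z) b = cwmk G q a b := by
  rw [crel1 a z b]
  have h1 : a * z * a⁻¹ = z := by
    rw [Subgroup.mem_center_iff.mp hz a]; group
  rw [cwmk_congr h1 rfl, cwmk_comm (Subgroup.mem_center_iff.mp hz (a*b*a⁻¹)).symm, one_mul]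

lemma cwmk_mul_center_snd {z : G} (hz : z ∈ Subgroup.center G) (a b : G) :
    cwmk G q a (b * z) = cwmk G q a b := by
  rw [crel2 a b z]
  have h1 : b * z * b⁻¹ = z := by
    rw [Subgroup.mem_center_iff.mp hz b]; group
  rw [cwmk_congr rfl h1, cwmk_comm (Subgroup.mem_center_iff.mp hz (b*a*b⁻¹)), mul_one]

variable [Zq.Normal]

include hZq in
lemma cwmk_congr_mk {a a' b b' : G} (ha : (a : G ⧸ Zq) = (a' : G ⧸ Zq))
    (hb : (b : G ⧸ Zq) = (b' : G ⧸ Zq)) : cwmk G q a' b' = cwmk G q a b := by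
  have hza := QuotientGroup.eq.mp ha
  have hzb := QuotientGroup.eq.mp hb
  have ea : a' = a * (a⁻¹ * a') := by group
  have eb : b' = b * (b⁻¹ * b') := by group
  rw [cwmk_congr ea eb, cwmk_mul_center_snd (Zq_center hZq hzb),
    cwmk_mul_center_right (Zq_center hZq hza)]

include hZq in
lemma cdmk_congr_mk {a a' : G} (ha : (a : G ⧸ Zq) = (a' : G ⧸ Zq)) :
    cdmk G q a' = cdmk G q a := by
  have hza := QuotientGroup.eq.mp ha
  set z := a⁻¹ * a' with hzdef
  have hzc := Zq_center hZq hza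
  have ea : a' = a * z := by rw [hzdef]; group
  rw [cdmk_congr' ea, crel4 a z]
  have hprod : cmk G q (emk G q (pmk G q (relProd G q a z))) = 1 := by
    rw [relProd, map_list_prod, map_list_prod, map_list_prod]
    refine List.prod_eq_one ?_
    intro x hx
    simp only [List.map_map, List.mem_map] at hx
    obtain ⟨j, -, rfl⟩ := hx
    show cwmk G q a⁻¹ ((a ^ ((1 : ℤ) - (q : ℤ) + (j + 1 : ℕ)) * z *
      (a ^ ((1 : ℤ) - (q : ℤ) + (j + 1 : ℕ)))⁻¹) ^ (j + 1)) = 1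
    have hcz : a ^ ((1 : ℤ) - (q : ℤ) + (j + 1 : ℕ)) * z *
        (a ^ ((1 : ℤ) - (q : ℤ) + (j + 1 : ℕ)))⁻¹ = z := by
      rw [Subgroup.mem_center_iff.mp hzc (a ^ ((1 : ℤ) - (q : ℤ) + (j + 1 : ℕ)))]; group
    rw [cwmk_congr rfl (by rw [hcz])]
    exact cwmk_comm (Subgroup.mem_center_iff.mp (pow_mem hzc (j+1)) a⁻¹)
  rw [hprod, mul_one, Zq_cdmk hZq hza, mul_one]

end Zq
end QTensor


namespace QTensor
set_option linter.unusedSectionVars false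

section transfer
variable {G H : Type} [Group G] [Group H] {q : ℕ}

lemma curHom_ext {K : Type} [Group K] {f f' : Cur G q →* K}
    (hw : ∀ g h : G, f (cwmk G q g h) = f' (cwmk G q g h))
    (hd : ∀ g : G, f (cdmk G q g) = f' (cdmk G q g)) : f = f' := by
  ext y
  have hy : y ∈ (⊤ : Subgroup (extSquare G q)) := trivial
  rw [← closure_extSquare] at hy
  refine Subgroup.closure_induction
    (p := fun y _ => f (cmk G q y) = f' (cmk G q y)) ?_ ?_ ?_ ?_ hy
  · rintro x (⟨g, h, rfl⟩ | ⟨g, rfl⟩)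
    exacts [hw g h, hd g]
  · simp only [map_one]
  · intro a b _ _ ha hb; simp only [map_mul]; rw [ha, hb]
  · intro a _ ha; simp only [map_inv]; rw [ha]

variable (ZqG : Subgroup G) (ZqH : Subgroup H) [ZqG.Normal] [ZqH.Normal]

/-- A set-theoretic section of `α` composed with the projection. -/
noncomputable def sig (α : (G ⧸ ZqG) ≃* (H ⧸ ZqH)) : G → H :=
  fun g => (α (QuotientGroup.mk g)).out

lemma sig_spec (α : (G ⧸ ZqG) ≃* (H ⧸ ZqH)) (g : G) :
    (QuotientGroup.mk (sig ZqG ZqH α g) : H ⧸ ZqH) = α (QuotientGroup.mk g) :=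
  QuotientGroup.out_eq' _

variable (hZqH : (ZqH : Set H) = {g | g ∈ Subgroup.center H ∧ dwmk H q g ∈ M0 H q})
variable (α : (G ⧸ ZqG) ≃* (H ⧸ ZqH)) (β : qPowComm G q ≃* qPowComm H q)

/-- The images of the generators under the transfer map. -/
noncomputable def PhiFun : Gen G → Cur H q
  | .t g h => cwmk H q (sig ZqG ZqH α g) (sig ZqG ZqH α h)
  | .d g => cdmk H q (sig ZqG ZqH α g)

lemma PhiFun_T (g h : G) :
    FreeGroup.lift (PhiFun ZqG ZqH α) (T G g h)
      = cwmk H q (sig ZqG ZqH α g) (sig ZqG ZqH α h) := FreeGroup.lift_apply_of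

lemma PhiFun_D (g : G) :
    FreeGroup.lift (PhiFun ZqG ZqH α) (D G g)
      = cdmk H q (sig ZqG ZqH α g) := FreeGroup.lift_apply_of

include hZqH in
lemma Phi_rels : ∀ r ∈ rels G q, FreeGroup.lift (PhiFun (q := q) ZqG ZqH α) r = 1 := by
  set σ := sig ZqG ZqH α with hσ
  have hmk : ∀ g : G, (QuotientGroup.mk (σ g) : H ⧸ ZqH) = α (QuotientGroup.mk g) :=
    sig_spec ZqG ZqH α
  rintro r ((((((⟨g, g₁, h, rfl⟩ | ⟨g, h, h₁, rfl⟩) | ⟨g, g₁, h₁, rfl⟩) | ⟨g, g₁, rfl⟩) |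
    ⟨g, g₁, rfl⟩) | ⟨g, h, rfl⟩) | ⟨hq, g, rfl⟩)
  · -- relation (1)
    simp only [map_mul, map_inv, PhiFun_T]
    rw [mul_inv_eq_one]
    rw [cwmk_congr_mk hZqH
        (show (QuotientGroup.mk (σ g * σ g₁) : H ⧸ ZqH) = QuotientGroup.mk (σ (g * g₁)) by
          simp [hmk, QuotientGroup.mk_mul, map_mul]) rfl,
      cwmk_congr_mk hZqH
        (show (QuotientGroup.mk (σ g * σ g₁ * (σ g)⁻¹) : H ⧸ ZqH)
            = QuotientGroup.mk (σ (g * g₁ * g⁻¹)) by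
          simp [hmk, QuotientGroup.mk_mul, QuotientGroup.mk_inv, map_mul, map_inv])
        (show (QuotientGroup.mk (σ g * σ h * (σ g)⁻¹) : H ⧸ ZqH)
            = QuotientGroup.mk (σ (g * h * g⁻¹)) by
          simp [hmk, QuotientGroup.mk_mul, QuotientGroup.mk_inv, map_mul, map_inv])]
    exact crel1 (σ g) (σ g₁) (σ h)
  · -- relation (2)
    simp only [map_mul, map_inv, PhiFun_T]
    rw [mul_inv_eq_one]
    rw [cwmk_congr_mk hZqH rfl
        (show (QuotientGroup.mk (σ h * σ h₁) : H ⧸ ZqH) = QuotientGroup.mk (σ (h * h₁)) by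
          simp [hmk, QuotientGroup.mk_mul, map_mul]),
      cwmk_congr_mk hZqH
        (show (QuotientGroup.mk (σ h * σ g * (σ h)⁻¹) : H ⧸ ZqH)
            = QuotientGroup.mk (σ (h * g * h⁻¹)) by
          simp [hmk, QuotientGroup.mk_mul, QuotientGroup.mk_inv, map_mul, map_inv])
        (show (QuotientGroup.mk (σ h * σ h₁ * (σ h)⁻¹) : H ⧸ ZqH)
            = QuotientGroup.mk (σ (h * h₁ * h⁻¹)) by
          simp [hmk, QuotientGroup.mk_mul, QuotientGroup.mk_inv, map_mul, map_inv])]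
    exact crel2 (σ g) (σ h) (σ h₁)
  · -- relation (3)
    simp only [map_mul, map_inv, PhiFun_T, PhiFun_D]
    rw [mul_inv_eq_one]
    rw [cwmk_congr_mk hZqH
        (show (QuotientGroup.mk ((σ g) ^ q * σ g₁ * ((σ g) ^ q)⁻¹) : H ⧸ ZqH)
            = QuotientGroup.mk (σ (g ^ q * g₁ * (g ^ q)⁻¹)) by
          simp [hmk, QuotientGroup.mk_mul, QuotientGroup.mk_inv, QuotientGroup.mk_pow,
            map_mul, map_inv, map_pow])
        (show (QuotientGroup.mk ((σ g) ^ q * σ h₁ * ((σ g) ^ q)⁻¹) : H ⧸ ZqH)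
            = QuotientGroup.mk (σ (g ^ q * h₁ * (g ^ q)⁻¹)) by
          simp [hmk, QuotientGroup.mk_mul, QuotientGroup.mk_inv, QuotientGroup.mk_pow,
            map_mul, map_inv, map_pow])]
    exact crel3 (σ g) (σ g₁) (σ h₁)
  · -- relation (4)
    simp only [map_mul, map_inv, PhiFun_D]
    rw [mul_inv_eq_one]
    have hlist : FreeGroup.lift (PhiFun ZqG ZqH α) (relProd G q g g₁)
        = cmk H q (emk H q (pmk H q (relProd H q (σ g) (σ g₁)))) := by
      rw [relProd, relProd, map_list_prod, map_list_prod, map_list_prod, map_list_prod,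
        List.map_map, List.map_map, List.map_map, List.map_map]
      refine congrArg List.prod (List.map_congr_left ?_)
      intro j hj
      show FreeGroup.lift (PhiFun ZqG ZqH α)
          (T G g⁻¹ ((g ^ ((1 : ℤ) - (q : ℤ) + (j + 1 : ℕ)) * g₁ *
            (g ^ ((1 : ℤ) - (q : ℤ) + (j + 1 : ℕ)))⁻¹) ^ (j + 1)))
        = cmk H q (emk H q (pmk H q (T H (σ g)⁻¹ ((σ g ^ ((1 : ℤ) - (q : ℤ) + (j + 1 : ℕ)) * σ g₁ *
            (σ g ^ ((1 : ℤ) - (q : ℤ) + (j + 1 : ℕ)))⁻¹) ^ (j + 1)))))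
      rw [PhiFun_T]
      exact cwmk_congr_mk hZqH
        (show (QuotientGroup.mk ((σ g)⁻¹) : H ⧸ ZqH) = QuotientGroup.mk (σ g⁻¹) by
          simp [hmk, QuotientGroup.mk_inv, map_inv])
        (show (QuotientGroup.mk ((σ g ^ ((1 : ℤ) - (q : ℤ) + (j + 1 : ℕ)) * σ g₁ *
              (σ g ^ ((1 : ℤ) - (q : ℤ) + (j + 1 : ℕ)))⁻¹) ^ (j + 1)) : H ⧸ ZqH)
            = QuotientGroup.mk (σ ((g ^ ((1 : ℤ) - (q : ℤ) + (j + 1 : ℕ)) * g₁ *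
              (g ^ ((1 : ℤ) - (q : ℤ) + (j + 1 : ℕ)))⁻¹) ^ (j + 1))) by
          simp [hmk, QuotientGroup.mk_mul, QuotientGroup.mk_inv, QuotientGroup.mk_pow,
            QuotientGroup.mk_zpow, map_mul, map_inv, map_pow, map_zpow])
    rw [hlist,
      cdmk_congr_mk hZqH
        (show (QuotientGroup.mk (σ g * σ g₁) : H ⧸ ZqH) = QuotientGroup.mk (σ (g * g₁)) by
          simp [hmk, QuotientGroup.mk_mul, map_mul])]
    exact crel4 (σ g) (σ g₁)
  · -- relation (5)
    simp only [map_mul, map_inv, PhiFun_T, PhiFun_D]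
    rw [mul_inv_eq_one]
    rw [cwmk_congr_mk hZqH
        (show (QuotientGroup.mk ((σ g) ^ q) : H ⧸ ZqH) = QuotientGroup.mk (σ (g ^ q)) by
          simp [hmk, QuotientGroup.mk_pow, map_pow])
        (show (QuotientGroup.mk ((σ g₁) ^ q) : H ⧸ ZqH) = QuotientGroup.mk (σ (g₁ ^ q)) by
          simp [hmk, QuotientGroup.mk_pow, map_pow])]
    exact crel5 (σ g) (σ g₁)
  · -- relation (6)
    simp only [map_mul, map_inv, map_pow, PhiFun_T, PhiFun_D]
    rw [mul_inv_eq_one]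
    rw [cdmk_congr_mk hZqH
        (show (QuotientGroup.mk (σ g * σ h * (σ g)⁻¹ * (σ h)⁻¹) : H ⧸ ZqH)
            = QuotientGroup.mk (σ (g * h * g⁻¹ * h⁻¹)) by
          simp [hmk, QuotientGroup.mk_mul, QuotientGroup.mk_inv, map_mul, map_inv])]
    exact crel6 (σ g) (σ h)
  · -- relation (7)
    rw [PhiFun_D]
    exact crel7 hq _

/-- The transfer map on the tensor square. -/
noncomputable def Phi0 : tensorSquare G q →* Cur H q :=
  PresentedGroup.toGroup (Phi_rels ZqG ZqH hZqH α)

lemma Phi0_t (g h : G) :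
    Phi0 ZqG ZqH hZqH α (tmk G q g h)
      = cwmk H q (sig ZqG ZqH α g) (sig ZqG ZqH α h) :=
  PresentedGroup.toGroup.of _

lemma Phi0_d (g : G) :
    Phi0 ZqG ZqH hZqH α (dmk G q g) = cdmk H q (sig ZqG ZqH α g) :=
  PresentedGroup.toGroup.of _

lemma nabla_le_ker : nabla G q ≤ (Phi0 ZqG ZqH hZqH α).ker := by
  refine Subgroup.normalClosure_le_normal ?_
  rintro x ⟨g, rfl⟩
  rw [SetLike.mem_coe, MonoidHom.mem_ker, Phi0_t]
  exact cwmk_comm rfl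

/-- The transfer map on the exterior square. -/
noncomputable def Phi1 : extSquare G q →* Cur H q :=
  QuotientGroup.lift (nabla G q) (Phi0 ZqG ZqH hZqH α) (nabla_le_ker ZqG ZqH hZqH α)

lemma Phi1_w (g h : G) :
    Phi1 ZqG ZqH hZqH α (wmk G q g h)
      = cwmk H q (sig ZqG ZqH α g) (sig ZqG ZqH α h) :=
  Phi0_t ZqG ZqH hZqH α g h

lemma Phi1_d (g : G) :
    Phi1 ZqG ZqH hZqH α (dwmk G q g) = cdmk H q (sig ZqG ZqH α g) :=
  Phi0_d ZqG ZqH hZqH α g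

variable (hαβ : ∀ (a₁ b₁ : G) (a₂ b₂ : H),
      α (QuotientGroup.mk a₁) = QuotientGroup.mk a₂ →
      α (QuotientGroup.mk b₁) = QuotientGroup.mk b₂ →
      ((β ⟨a₁ * b₁ * a₁⁻¹ * b₁⁻¹, commutator_mem_qPowComm G q a₁ b₁⟩ : qPowComm H q) : H)
          = a₂ * b₂ * a₂⁻¹ * b₂⁻¹ ∧
      ((β ⟨a₁ ^ q, pow_mem_qPowComm G q a₁⟩ : qPowComm H q) : H) = a₂ ^ q)

include hαβ in
lemma sig_beta_comm (a b : G) :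
    ((β ⟨a * b * a⁻¹ * b⁻¹, commutator_mem_qPowComm G q a b⟩ : qPowComm H q) : H)
      = sig ZqG ZqH α a * sig ZqG ZqH α b * (sig ZqG ZqH α a)⁻¹ * (sig ZqG ZqH α b)⁻¹ :=
  (hαβ a b (sig ZqG ZqH α a) (sig ZqG ZqH α b)
    (sig_spec ZqG ZqH α a).symm (sig_spec ZqG ZqH α b).symm).1

include hαβ in
lemma sig_beta_pow (a : G) :
    ((β ⟨a ^ q, pow_mem_qPowComm G q a⟩ : qPowComm H q) : H) = (sig ZqG ZqH α a) ^ q :=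
  (hαβ a a (sig ZqG ZqH α a) (sig ZqG ZqH α a)
    (sig_spec ZqG ZqH α a).symm (sig_spec ZqG ZqH α a).symm).2

include hαβ in
lemma sig_comm {a b : G} (hab : a * b = b * a) :
    sig ZqG ZqH α a * sig ZqG ZqH α b = sig ZqG ZqH α b * sig ZqG ZqH α a := by
  set σ := sig ZqG ZqH α
  have h := sig_beta_comm ZqG ZqH α β hαβ a b
  have h0 : (⟨a * b * a⁻¹ * b⁻¹, commutator_mem_qPowComm G q a b⟩ : qPowComm G q) = 1 := by
    apply Subtype.ext
    show a * b * a⁻¹ * b⁻¹ = 1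
    rw [hab]; group
  rw [h0, map_one, OneMemClass.coe_one] at h
  have hcom : σ a * σ b * (σ a)⁻¹ * (σ b)⁻¹ = 1 := h.symm
  calc σ a * σ b = (σ a * σ b * (σ a)⁻¹ * (σ b)⁻¹) * (σ b * σ a) := by group
    _ = σ b * σ a := by rw [hcom, one_mul]

include hαβ in
lemma M0_le_ker : M0 G q ≤ (Phi1 ZqG ZqH hZqH α).ker := by
  rw [M0]
  refine (Subgroup.closure_le _).mpr ?_
  rintro x ⟨a, b, hab, rfl⟩
  rw [SetLike.mem_coe, MonoidHom.mem_ker, Phi1_w]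
  exact cwmk_comm (sig_comm ZqG ZqH α β hαβ hab)

/-- The transfer map on the curly exterior square. -/
noncomputable def Phi : Cur G q →* Cur H q :=
  QuotientGroup.lift (M0 G q) (Phi1 ZqG ZqH hZqH α) (M0_le_ker ZqG ZqH hZqH α β hαβ)

lemma Phi_cw (g h : G) :
    Phi ZqG ZqH hZqH α β hαβ (cwmk G q g h)
      = cwmk H q (sig ZqG ZqH α g) (sig ZqG ZqH α h) :=
  Phi1_w ZqG ZqH hZqH α g h

lemma Phi_cd (g : G) :
    Phi ZqG ZqH hZqH α β hαβ (cdmk G q g) = cdmk H q (sig ZqG ZqH α g) :=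
  Phi1_d ZqG ZqH hZqH α g

end transfer
end QTensor


namespace QTensor
set_option linter.unusedSectionVars false

section eta
variable {G : Type} [Group G] {q : ℕ}

lemma eta_mem (ηG : extSquare G q →* G)
    (h1 : ∀ g h : G, ηG (wmk G q g h) = g * h * g⁻¹ * h⁻¹)
    (h2 : ∀ g : G, ηG (dwmk G q g) = g ^ q) (x : extSquare G q) :
    ηG x ∈ qPowComm G q := by
  have hx : x ∈ (⊤ : Subgroup (extSquare G q)) := trivial
  rw [← closure_extSquare] at hx
  refine Subgroup.closure_induction (p := fun y _ => ηG y ∈ qPowComm G q) ?_ ?_ ?_ ?_ hx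
  · rintro x (⟨g, h, rfl⟩ | ⟨g, rfl⟩)
    · show ηG (wmk G q g h) ∈ qPowComm G q
      rw [h1]; exact commutator_mem_qPowComm G q g h
    · show ηG (dwmk G q g) ∈ qPowComm G q
      rw [h2]; exact pow_mem_qPowComm G q g
  · show ηG 1 ∈ qPowComm G q
    rw [map_one]; exact one_mem _
  · intro a b _ _ ha hb
    show ηG (a * b) ∈ qPowComm G q
    rw [map_mul]; exact mul_mem ha hb
  · intro a _ ha
    show ηG a⁻¹ ∈ qPowComm G q
    rw [map_inv]; exact inv_mem ha

lemma M0_le_eta_ker (ηG : extSquare G q →* G)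
    (h1 : ∀ g h : G, ηG (wmk G q g h) = g * h * g⁻¹ * h⁻¹)
    (h2 : ∀ g : G, ηG (dwmk G q g) = g ^ q) :
    M0 G q ≤ (ηG.codRestrict (qPowComm G q) (eta_mem ηG h1 h2)).ker := by
  rw [M0]
  refine (Subgroup.closure_le _).mpr ?_
  rintro x ⟨a, b, hab, rfl⟩
  rw [SetLike.mem_coe, MonoidHom.mem_ker]
  refine Subtype.ext ?_
  show ηG (wmk G q a b) = 1
  rw [h1, hab]; group

/-- The map induced by `η` on the curly exterior square, with target `G^q[G,G]`. -/
def etaBar (ηG : extSquare G q →* G)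
    (h1 : ∀ g h : G, ηG (wmk G q g h) = g * h * g⁻¹ * h⁻¹)
    (h2 : ∀ g : G, ηG (dwmk G q g) = g ^ q) : Cur G q →* qPowComm G q :=
  QuotientGroup.lift (M0 G q) (ηG.codRestrict (qPowComm G q) (eta_mem ηG h1 h2))
    (M0_le_eta_ker ηG h1 h2)

lemma etaBar_cw (ηG : extSquare G q →* G) (h1) (h2) (g h : G) :
    etaBar ηG h1 h2 (cwmk G q g h)
      = ⟨g * h * g⁻¹ * h⁻¹, commutator_mem_qPowComm G q g h⟩ :=
  Subtype.ext (h1 g h)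

lemma etaBar_cd (ηG : extSquare G q →* G) (h1) (h2) (g : G) :
    etaBar ηG h1 h2 (cdmk G q g) = ⟨g ^ q, pow_mem_qPowComm G q g⟩ :=
  Subtype.ext (h2 g)

end eta

section etaPhi
variable {G H : Type} [Group G] [Group H] {q : ℕ}
variable (ZqG : Subgroup G) (ZqH : Subgroup H) [ZqG.Normal] [ZqH.Normal]
variable (hZqH : (ZqH : Set H) = {g | g ∈ Subgroup.center H ∧ dwmk H q g ∈ M0 H q})
variable (α : (G ⧸ ZqG) ≃* (H ⧸ ZqH)) (β : qPowComm G q ≃* qPowComm H q)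
variable (hαβ : ∀ (a₁ b₁ : G) (a₂ b₂ : H),
      α (QuotientGroup.mk a₁) = QuotientGroup.mk a₂ →
      α (QuotientGroup.mk b₁) = QuotientGroup.mk b₂ →
      ((β ⟨a₁ * b₁ * a₁⁻¹ * b₁⁻¹, commutator_mem_qPowComm G q a₁ b₁⟩ : qPowComm H q) : H)
          = a₂ * b₂ * a₂⁻¹ * b₂⁻¹ ∧
      ((β ⟨a₁ ^ q, pow_mem_qPowComm G q a₁⟩ : qPowComm H q) : H) = a₂ ^ q)

include hαβ in
lemma eta_Phi_comm (ηG : extSquare G q →* G)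
    (hηG1 : ∀ g h : G, ηG (wmk G q g h) = g * h * g⁻¹ * h⁻¹)
    (hηG2 : ∀ g : G, ηG (dwmk G q g) = g ^ q)
    (ηH : extSquare H q →* H)
    (hηH1 : ∀ g h : H, ηH (wmk H q g h) = g * h * g⁻¹ * h⁻¹)
    (hηH2 : ∀ g : H, ηH (dwmk H q g) = g ^ q) :
    (etaBar ηH hηH1 hηH2).comp (Phi ZqG ZqH hZqH α β hαβ)
      = β.toMonoidHom.comp (etaBar ηG hηG1 hηG2) := by
  refine curHom_ext (fun g h => ?_) (fun g => ?_)
  · rw [MonoidHom.comp_apply, MonoidHom.comp_apply, Phi_cw, etaBar_cw, etaBar_cw]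
    exact Subtype.ext (sig_beta_comm ZqG ZqH α β hαβ g h).symm
  · rw [MonoidHom.comp_apply, MonoidHom.comp_apply, Phi_cd, etaBar_cd, etaBar_cd]
    exact Subtype.ext (sig_beta_pow ZqG ZqH α β hαβ g).symm

include hαβ in
lemma hαβ_symm : ∀ (a₁ b₁ : H) (a₂ b₂ : G),
    α.symm (QuotientGroup.mk a₁) = QuotientGroup.mk a₂ →
    α.symm (QuotientGroup.mk b₁) = QuotientGroup.mk b₂ →
    ((β.symm ⟨a₁ * b₁ * a₁⁻¹ * b₁⁻¹, commutator_mem_qPowComm H q a₁ b₁⟩ : qPowComm G q) : G)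
        = a₂ * b₂ * a₂⁻¹ * b₂⁻¹ ∧
    ((β.symm ⟨a₁ ^ q, pow_mem_qPowComm H q a₁⟩ : qPowComm G q) : G) = a₂ ^ q := by
  intro a₁ b₁ a₂ b₂ h1 h2
  have h1' : α (QuotientGroup.mk a₂) = QuotientGroup.mk a₁ := by
    rw [← h1, MulEquiv.apply_symm_apply]
  have h2' : α (QuotientGroup.mk b₂) = QuotientGroup.mk b₁ := by
    rw [← h2, MulEquiv.apply_symm_apply]
  obtain ⟨hc, hp⟩ := hαβ a₂ b₂ a₁ b₁ h1' h2'
  constructor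
  · have e : β ⟨a₂ * b₂ * a₂⁻¹ * b₂⁻¹, commutator_mem_qPowComm G q a₂ b₂⟩
        = ⟨a₁ * b₁ * a₁⁻¹ * b₁⁻¹, commutator_mem_qPowComm H q a₁ b₁⟩ := Subtype.ext hc
    rw [← e, MulEquiv.symm_apply_apply]
  · have e : β ⟨a₂ ^ q, pow_mem_qPowComm G q a₂⟩
        = ⟨a₁ ^ q, pow_mem_qPowComm H q a₁⟩ := Subtype.ext hp
    rw [← e, MulEquiv.symm_apply_apply]

end etaPhi
end QTensor

open QTensor in
/-- Invariance of the `q`-Bogomolov multiplier `B₀^q = M^q/M₀^q` under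
`q`-isoclinism.  Here `M^q(G) = ker ηG` (with `ηG : G ∧^q G → G` given by its
defining properties), `M₀^q(G)` is generated by the `x ∧ y` with `[x,y] = 1`,
and `Z_q(G) = {g ∈ Z(G) : {(g,g)} ∈ M₀^q(G)}`. -/
theorem qBogomolov_iso_of_qIsoclinic (q : ℕ) (G H : Type) [Group G] [Group H]
    (ηG : extSquare G q →* G)
    (hηG1 : ∀ g h : G, ηG (wmk G q g h) = g * h * g⁻¹ * h⁻¹)
    (hηG2 : ∀ g : G, ηG (dwmk G q g) = g ^ q)
    (ηH : extSquare H q →* H)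
    (hηH1 : ∀ g h : H, ηH (wmk H q g h) = g * h * g⁻¹ * h⁻¹)
    (hηH2 : ∀ g : H, ηH (dwmk H q g) = g ^ q)
    [((M0 G q).subgroupOf ηG.ker).Normal] [((M0 H q).subgroupOf ηH.ker).Normal]
    -- the subgroups `Z_q`:
    (ZqG : Subgroup G) [ZqG.Normal]
    (hZqG : (ZqG : Set G) = {g | g ∈ Subgroup.center G ∧ dwmk G q g ∈ M0 G q})
    (ZqH : Subgroup H) [ZqH.Normal]
    (hZqH : (ZqH : Set H) = {g | g ∈ Subgroup.center H ∧ dwmk H q g ∈ M0 H q})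
    -- q-isoclinism data:
    (α : (G ⧸ ZqG) ≃* (H ⧸ ZqH)) (β : qPowComm G q ≃* qPowComm H q)
    (hαβ : ∀ (a₁ b₁ : G) (a₂ b₂ : H),
      α (QuotientGroup.mk a₁) = QuotientGroup.mk a₂ →
      α (QuotientGroup.mk b₁) = QuotientGroup.mk b₂ →
      ((β ⟨a₁ * b₁ * a₁⁻¹ * b₁⁻¹, commutator_mem_qPowComm G q a₁ b₁⟩ : qPowComm H q) : H)
          = a₂ * b₂ * a₂⁻¹ * b₂⁻¹ ∧
      ((β ⟨a₁ ^ q, pow_mem_qPowComm G q a₁⟩ : qPowComm H q) : H) = a₂ ^ q) :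
    Nonempty ((ηG.ker ⧸ (M0 G q).subgroupOf ηG.ker) ≃*
              (ηH.ker ⧸ (M0 H q).subgroupOf ηH.ker)) := by
  classical
  -- the two transfer maps
  set Φ := Phi ZqG ZqH hZqH α β hαβ with hΦdef
  set Ψ := Phi ZqH ZqG hZqG α.symm β.symm (hαβ_symm ZqG ZqH α β hαβ) with hΨdef
  -- they are mutually inverse
  have hΨΦ : Ψ.comp Φ = MonoidHom.id (Cur G q) := by
    refine curHom_ext (fun g h => ?_) (fun g => ?_)
    · rw [MonoidHom.comp_apply, MonoidHom.id_apply, hΦdef, hΨdef, Phi_cw, Phi_cw]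
      refine cwmk_congr_mk hZqG ?_ ?_
      · rw [sig_spec, sig_spec, MulEquiv.symm_apply_apply]
      · rw [sig_spec, sig_spec, MulEquiv.symm_apply_apply]
    · rw [MonoidHom.comp_apply, MonoidHom.id_apply, hΦdef, hΨdef, Phi_cd, Phi_cd]
      refine cdmk_congr_mk hZqG ?_
      rw [sig_spec, sig_spec, MulEquiv.symm_apply_apply]
  have hΦΨ : Φ.comp Ψ = MonoidHom.id (Cur H q) := by
    refine curHom_ext (fun g h => ?_) (fun g => ?_)
    · rw [MonoidHom.comp_apply, MonoidHom.id_apply, hΦdef, hΨdef, Phi_cw, Phi_cw]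
      refine cwmk_congr_mk hZqH ?_ ?_
      · rw [sig_spec, sig_spec, MulEquiv.apply_symm_apply]
      · rw [sig_spec, sig_spec, MulEquiv.apply_symm_apply]
    · rw [MonoidHom.comp_apply, MonoidHom.id_apply, hΦdef, hΨdef, Phi_cd, Phi_cd]
      refine cdmk_congr_mk hZqH ?_
      rw [sig_spec, sig_spec, MulEquiv.apply_symm_apply]
  set E : Cur G q ≃* Cur H q := MonoidHom.toMulEquiv Φ Ψ hΨΦ hΦΨ with hEdef
  -- the eta-bar maps
  set ηbG := etaBar ηG hηG1 hηG2 with hηbG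
  set ηbH := etaBar ηH hηH1 hηH2 with hηbH
  have hcommG : ∀ y : Cur G q, ηbH (Φ y) = β (ηbG y) := by
    intro y
    have := DFunLike.congr_fun
      (eta_Phi_comm ZqG ZqH hZqH α β hαβ ηG hηG1 hηG2 ηH hηH1 hηH2) y
    simpa using this
  have hcommH : ∀ z : Cur H q, ηbG (Ψ z) = β.symm (ηbH z) := by
    intro z
    have := DFunLike.congr_fun
      (eta_Phi_comm ZqH ZqG hZqG α.symm β.symm (hαβ_symm ZqG ZqH α β hαβ)
        ηH hηH1 hηH2 ηG hηG1 hηG2) z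
    simpa using this
  -- the maps from the kernels
  set fG : ηG.ker →* Cur G q := (cmk G q).comp ηG.ker.subtype with hfG
  set fH : ηH.ker →* Cur H q := (cmk H q).comp ηH.ker.subtype with hfH
  have hkerG : fG.ker = (M0 G q).subgroupOf ηG.ker := by
    ext x
    rw [MonoidHom.mem_ker, Subgroup.mem_subgroupOf]
    exact QuotientGroup.eq_one_iff _
  have hkerH : fH.ker = (M0 H q).subgroupOf ηH.ker := by
    ext x
    rw [MonoidHom.mem_ker, Subgroup.mem_subgroupOf]
    exact QuotientGroup.eq_one_iff _
  have hrangeG : fG.range = ηbG.ker := by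
    ext y
    constructor
    · rintro ⟨x, rfl⟩
      rw [MonoidHom.mem_ker]
      exact Subtype.ext (MonoidHom.mem_ker.mp x.2)
    · intro hy
      obtain ⟨x, rfl⟩ := QuotientGroup.mk'_surjective (M0 G q) y
      have hx : ηG x = 1 := congrArg Subtype.val (MonoidHom.mem_ker.mp hy)
      exact ⟨⟨x, MonoidHom.mem_ker.mpr hx⟩, rfl⟩
  have hrangeH : fH.range = ηbH.ker := by
    ext y
    constructor
    · rintro ⟨x, rfl⟩
      rw [MonoidHom.mem_ker]
      exact Subtype.ext (MonoidHom.mem_ker.mp x.2)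
    · intro hy
      obtain ⟨x, rfl⟩ := QuotientGroup.mk'_surjective (M0 H q) y
      have hx : ηH x = 1 := congrArg Subtype.val (MonoidHom.mem_ker.mp hy)
      exact ⟨⟨x, MonoidHom.mem_ker.mpr hx⟩, rfl⟩
  have hmap : Subgroup.map (E : Cur G q →* Cur H q) ηbG.ker = ηbH.ker := by
    ext z
    constructor
    · rintro ⟨y, hy, rfl⟩
      have hy1 : ηbG y = 1 := MonoidHom.mem_ker.mp hy
      refine MonoidHom.mem_ker.mpr ?_
      show ηbH (Φ y) = 1
      rw [hcommG, hy1, map_one]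
    · intro hz
      have hz1 : ηbH z = 1 := MonoidHom.mem_ker.mp hz
      refine ⟨E.symm z, MonoidHom.mem_ker.mpr ?_, E.apply_symm_apply z⟩
      show ηbG (Ψ z) = 1
      rw [hcommH, hz1, map_one]
  exact ⟨(QuotientGroup.quotientMulEquivOfEq hkerG.symm).trans
    ((QuotientGroup.quotientKerEquivRange fG).trans
    ((MulEquiv.subgroupCongr hrangeG).trans
    ((MulEquiv.subgroupMap E ηbG.ker).trans
    ((MulEquiv.subgroupCongr hmap).trans
    ((MulEquiv.subgroupCongr hrangeH).symm.trans
    ((QuotientGroup.quotientKerEquivRange fH).symm.trans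
    (QuotientGroup.quotientMulEquivOfEq hkerH)))))))⟩
end

section
/- Let q ≥ 0 be an integer. If A is an abelian group, then A⊗^q A is abelian. -/
namespace QTensorAux

open QTensor

variable {q : ℕ} {A : Type} [CommGroup A]

lemma conj_eq (g x : A) : g * x * g⁻¹ = x := by
  rw [mul_comm g x, mul_inv_cancel_right]

lemma mk_rel {r : FreeGroup (Gen A)} (h : r ∈ rels A q) :
    PresentedGroup.mk (rels A q) r = 1 :=
  (QuotientGroup.eq_one_iff r).2 (Subgroup.subset_normalClosure h)

lemma mk_T (g h : A) : PresentedGroup.mk (rels A q) (T A g h) = tmk A q g h := rfl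

lemma mk_D (g : A) : PresentedGroup.mk (rels A q) (D A g) = dmk A q g := rfl

lemma tmk_mul_left (g g₁ h : A) :
    tmk A q (g * g₁) h = tmk A q g₁ h * tmk A q g h := by
  have h1 : (T A (g * g₁) h * (T A (g * g₁ * g⁻¹) (g * h * g⁻¹) * T A g h)⁻¹)
      ∈ rels A q :=
    Or.inl (Or.inl (Or.inl (Or.inl (Or.inl (Or.inl ⟨g, g₁, h, rfl⟩)))))
  have h2 := mk_rel h1
  simp only [map_mul, map_inv, conj_eq, mk_T, mul_inv_eq_one] at h2
  exact mul_inv_eq_one.mp h2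

lemma tmk_mul_right (g h h₁ : A) :
    tmk A q g (h * h₁) = tmk A q g h * tmk A q g h₁ := by
  have h1 : (T A g (h * h₁) * (T A g h * T A (h * g * h⁻¹) (h * h₁ * h⁻¹))⁻¹)
      ∈ rels A q :=
    Or.inl (Or.inl (Or.inl (Or.inl (Or.inl (Or.inr ⟨g, h, h₁, rfl⟩)))))
  have h2 := mk_rel h1
  simp only [map_mul, map_inv, conj_eq, mk_T, mul_inv_eq_one] at h2
  exact mul_inv_eq_one.mp h2

lemma dmk_tmk_comm (g g₁ h₁ : A) :
    dmk A q g * tmk A q g₁ h₁ = tmk A q g₁ h₁ * dmk A q g := by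
  have h1 : (D A g * T A g₁ h₁ * (D A g)⁻¹ *
      (T A (g ^ q * g₁ * (g ^ q)⁻¹) (g ^ q * h₁ * (g ^ q)⁻¹))⁻¹) ∈ rels A q :=
    Or.inl (Or.inl (Or.inl (Or.inl (Or.inr ⟨g, g₁, h₁, rfl⟩))))
  have h2 := mk_rel h1
  simp only [map_mul, map_inv, conj_eq, mk_T, mk_D, mul_inv_eq_one] at h2
  calc dmk A q g * tmk A q g₁ h₁
      = dmk A q g * tmk A q g₁ h₁ * (dmk A q g)⁻¹ * dmk A q g := by group
    _ = tmk A q g₁ h₁ * dmk A q g := by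
      have h3 := mul_inv_eq_one.mp h2; exact congrArg (· * dmk A q g) h3

lemma tmk_one_left (h : A) : tmk A q 1 h = 1 := by
  have h2 := tmk_mul_left (q := q) 1 1 h
  rw [one_mul] at h2
  exact (mul_eq_left.mp h2.symm)

lemma dmk_one : dmk A q 1 = 1 := by
  have h1 : (D A ((1 : A) * 1) * (D A 1 * relProd A q 1 1 * D A 1)⁻¹) ∈ rels A q :=
    Or.inl (Or.inl (Or.inl (Or.inr ⟨1, 1, rfl⟩)))
  have h2 := mk_rel h1
  have hp : PresentedGroup.mk (rels A q) (relProd A q 1 1) = 1 := by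
    unfold relProd
    rw [map_list_prod]
    apply List.prod_eq_one
    intro x hx
    simp only [List.map_map, List.mem_map] at hx
    obtain ⟨j, -, rfl⟩ := hx
    simp only [Function.comp_apply, mk_T, inv_one]
    exact tmk_one_left _
  simp only [map_mul, map_inv, mk_D, mul_inv_eq_one, hp, one_mul, mul_one] at h2
  exact (mul_eq_left.mp (mul_inv_eq_one.mp h2).symm)

lemma tmk_pow_q (g h : A) : (tmk A q g h) ^ q = 1 := by
  have h1 : (D A (g * h * g⁻¹ * h⁻¹) * ((T A g h) ^ q)⁻¹) ∈ rels A q :=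
    Or.inl (Or.inr ⟨g, h, rfl⟩)
  have h2 := mk_rel h1
  simp only [map_mul, map_inv, map_pow, conj_eq, mul_inv_cancel, mk_T, mk_D,
    mul_inv_eq_one] at h2
  have h3 := mul_inv_eq_one.mp h2
  rw [dmk_one] at h3
  exact h3.symm

lemma tmk_pow_left (g h : A) (n : ℕ) : tmk A q (g ^ n) h = (tmk A q g h) ^ n := by
  induction n with
  | zero => simpa using tmk_one_left (q := q) h
  | succ n ih => rw [pow_succ, tmk_mul_left, ih, ← pow_succ']

lemma dmk_comm (g g₁ : A) : dmk A q g * dmk A q g₁ = dmk A q g₁ * dmk A q g := by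
  have h1 : (D A g * D A g₁ * (D A g)⁻¹ * (D A g₁)⁻¹ *
      (T A (g ^ q) (g₁ ^ q))⁻¹) ∈ rels A q :=
    Or.inl (Or.inl (Or.inr ⟨g, g₁, rfl⟩))
  have h2 := mk_rel h1
  simp only [map_mul, map_inv, mk_T, mk_D] at h2
  have ht : tmk A q (g ^ q) (g₁ ^ q) = 1 := by
    rw [tmk_pow_left]; exact tmk_pow_q g (g₁ ^ q)
  rw [ht] at h2
  have h3 : dmk A q g * dmk A q g₁ * (dmk A q g)⁻¹ * (dmk A q g₁)⁻¹ = 1 := by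
    have := mul_eq_of_eq_mul_inv h2.symm  -- may not apply; use group manip below
    group at this ⊢
    simpa using (show dmk A q g * dmk A q g₁ * (dmk A q g)⁻¹ * (dmk A q g₁)⁻¹ = 1 from
      (mul_inv_eq_one.mp h2).trans inv_one)
  calc dmk A q g * dmk A q g₁
      = (dmk A q g * dmk A q g₁ * (dmk A q g)⁻¹ * (dmk A q g₁)⁻¹) *
        (dmk A q g₁ * dmk A q g) := by group
    _ = dmk A q g₁ * dmk A q g := by rw [h3, one_mul]

lemma tmk_comm (g h g₁ h₁ : A) :
    tmk A q g h * tmk A q g₁ h₁ = tmk A q g₁ h₁ * tmk A q g h := by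
  have e1 : tmk A q (g * g₁) (h * h₁)
      = tmk A q g₁ h * (tmk A q g₁ h₁ * (tmk A q g h * tmk A q g h₁)) := by
    rw [tmk_mul_left, tmk_mul_right, tmk_mul_right]
    group
  have e2 : tmk A q (g * g₁) (h * h₁)
      = tmk A q g₁ h * (tmk A q g h * (tmk A q g₁ h₁ * tmk A q g h₁)) := by
    rw [tmk_mul_right, tmk_mul_left, tmk_mul_left]
    group
  have e3 := mul_left_cancel (e1.symm.trans e2)
  rw [← mul_assoc, ← mul_assoc] at e3
  exact (mul_right_cancel e3).symm

lemma of_comm (j k : Gen A) :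
    (PresentedGroup.of j : PresentedGroup (rels A q)) * PresentedGroup.of k =
      PresentedGroup.of k * PresentedGroup.of j := by
  cases j with
  | t g h =>
    cases k with
    | t g₁ h₁ => exact tmk_comm g h g₁ h₁
    | d g₁ => exact (dmk_tmk_comm g₁ g h).symm
  | d g =>
    cases k with
    | t g₁ h₁ => exact dmk_tmk_comm g g₁ h₁
    | d g₁ => exact dmk_comm g g₁

end QTensorAux

open QTensor in
/-- If `A` is abelian, then `A ⊗^q A` is abelian. -/
theorem tensorSquare_comm_of_comm (q : ℕ) (A : Type) [CommGroup A] :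
    ∀ x y : tensorSquare A q, x * y = y * x := by
  intro x y
  have key : ∀ j : Gen A, (PresentedGroup.of j : PresentedGroup (rels A q)) ∈
      Subgroup.center (PresentedGroup (rels A q)) := by
    intro j
    rw [Subgroup.mem_center_iff]
    intro g
    have hg : g ∈ Subgroup.centralizer
        {(PresentedGroup.of j : PresentedGroup (rels A q))} := by
      refine PresentedGroup.generated_by (rels A q) _ (fun k => ?_) g
      rw [Subgroup.mem_centralizer_iff]
      intro h hh
      rw [Set.mem_singleton_iff] at hh
      subst hh
      exact QTensorAux.of_comm j k
    exact (Subgroup.mem_centralizer_iff.mp hg _ (Set.mem_singleton _)).symm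
  have hx : x ∈ Subgroup.center (PresentedGroup (rels A q)) :=
    PresentedGroup.generated_by (rels A q) _ key x
  exact (Subgroup.mem_center_iff.mp hx y).symm
end

section
/- Let q ≥ 0 be an integer. If A is a finitely generated abelian group, then A⊗^q A is a finitely generated group. -/
namespace QTensor

variable {A : Type} [CommGroup A] {q : ℕ}

/-- The canonical projection from the free group to the tensor square. -/
def phi (A : Type) [CommGroup A] (q : ℕ) : FreeGroup (Gen A) →* tensorSquare A q :=
  PresentedGroup.mk (rels A q)

theorem phi_rel {r : FreeGroup (Gen A)} (hr : r ∈ rels A q) : phi A q r = 1 :=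
  (QuotientGroup.eq_one_iff r).mpr (Subgroup.subset_normalClosure hr)

@[simp] theorem phi_T (g h : A) : phi A q (T A g h) = tmk A q g h := rfl

@[simp] theorem phi_D (g : A) : phi A q (D A g) = dmk A q g := rfl

theorem tmk_mul_left (g g₁ h : A) :
    tmk A q (g * g₁) h = tmk A q g₁ h * tmk A q g h := by
  have hr := phi_rel (A := A) (q := q)
    (Or.inl (Or.inl (Or.inl (Or.inl (Or.inl (Or.inl ⟨g, g₁, h, rfl⟩))))))
  rw [map_mul, map_inv, mul_inv_eq_one, map_mul] at hr
  simpa [mul_inv_cancel_comm] using hr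

theorem tmk_mul_right (g h h₁ : A) :
    tmk A q g (h * h₁) = tmk A q g h * tmk A q g h₁ := by
  have hr := phi_rel (A := A) (q := q)
    (Or.inl (Or.inl (Or.inl (Or.inl (Or.inl (Or.inr ⟨g, h, h₁, rfl⟩))))))
  rw [map_mul, map_inv, mul_inv_eq_one, map_mul] at hr
  simpa [mul_inv_cancel_comm] using hr

theorem dmk_mul (g g₁ : A) :
    dmk A q (g * g₁) = dmk A q g * phi A q (relProd A q g g₁) * dmk A q g₁ := by
  have hr := phi_rel (A := A) (q := q)
    (Or.inl (Or.inl (Or.inl (Or.inr ⟨g, g₁, rfl⟩))))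
  rw [map_mul, map_inv, mul_inv_eq_one, map_mul, map_mul] at hr
  simpa using hr

theorem tmk_one_left (h : A) : tmk A q 1 h = 1 := by
  have := tmk_mul_left (q := q) (1 : A) 1 h
  rw [one_mul] at this
  exact left_eq_mul.mp this

theorem tmk_one_right (g : A) : tmk A q g 1 = 1 := by
  have := tmk_mul_right (q := q) g (1 : A) 1
  rw [one_mul] at this
  exact left_eq_mul.mp this

theorem tmk_inv_left (g h : A) : tmk A q g⁻¹ h = (tmk A q g h)⁻¹ := by
  have := tmk_mul_left (q := q) g g⁻¹ h
  rw [mul_inv_cancel, tmk_one_left] at this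
  exact eq_inv_of_mul_eq_one_left this.symm

theorem tmk_inv_right (g h : A) : tmk A q g h⁻¹ = (tmk A q g h)⁻¹ := by
  have := tmk_mul_right (q := q) g h h⁻¹
  rw [mul_inv_cancel, tmk_one_right] at this
  exact eq_inv_of_mul_eq_one_right this.symm

end QTensor

open QTensor in
/-- If `A` is a finitely generated abelian group, then `A ⊗^q A` is finitely
generated. -/
theorem tensorSquare_fg_of_fg (q : ℕ) (A : Type) [CommGroup A] [Group.FG A] :
    Group.FG (tensorSquare A q) := by
  classical
  obtain ⟨S, hS, hSfin⟩ := Group.fg_iff.mp (inferInstance : Group.FG A)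
  set Gset : Set (tensorSquare A q) :=
    (fun p : A × A => tmk A q p.1 p.2) '' (S ×ˢ S) ∪ dmk A q '' S with hGset
  set K : Subgroup (tensorSquare A q) := Subgroup.closure Gset with hK
  -- every tensor symbol lies in K
  have memcl : ∀ a : A, a ∈ Subgroup.closure S := fun a => hS ▸ Subgroup.mem_top a
  have step1 : ∀ a ∈ S, ∀ h : A, tmk A q a h ∈ K := by
    intro a ha h
    refine Subgroup.closure_induction (p := fun x _ => tmk A q a x ∈ K)
      ?_ ?_ ?_ ?_ (memcl h)
    · intro x hx
      exact Subgroup.subset_closure (Or.inl ⟨(a, x), ⟨ha, hx⟩, rfl⟩)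
    · show tmk A q a 1 ∈ K
      rw [tmk_one_right]; exact one_mem K
    · intro x y _ _ px py; rw [tmk_mul_right]; exact mul_mem px py
    · intro x _ px; rw [tmk_inv_right]; exact inv_mem px
  have tmk_mem : ∀ g h : A, tmk A q g h ∈ K := by
    intro g h
    refine Subgroup.closure_induction (p := fun x _ => tmk A q x h ∈ K)
      ?_ ?_ ?_ ?_ (memcl g)
    · intro x hx; exact step1 x hx h
    · show tmk A q 1 h ∈ K
      rw [tmk_one_left]; exact one_mem K
    · intro x y _ _ px py; rw [tmk_mul_left]; exact mul_mem py px
    · intro x _ px; rw [tmk_inv_left]; exact inv_mem px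
  have relProd_mem : ∀ g g₁ : A, phi A q (relProd A q g g₁) ∈ K := by
    intro g g₁
    rw [relProd, map_list_prod, List.map_map]
    refine Subgroup.list_prod_mem K ?_
    intro x hx
    simp only [List.mem_map] at hx
    obtain ⟨j, -, rfl⟩ := hx
    exact tmk_mem _ _
  have dmk_one_mem : dmk A q (1 : A) ∈ K := by
    have h1 := dmk_mul (q := q) (1 : A) 1
    rw [one_mul, mul_assoc] at h1
    have h2 := left_eq_mul.mp h1
    rw [eq_inv_of_mul_eq_one_right h2]
    exact inv_mem (relProd_mem 1 1)
  have dmk_mem : ∀ g : A, dmk A q g ∈ K := by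
    intro g
    refine Subgroup.closure_induction (p := fun x _ => dmk A q x ∈ K)
      ?_ ?_ ?_ ?_ (memcl g)
    · intro x hx; exact Subgroup.subset_closure (Or.inr ⟨x, hx, rfl⟩)
    · exact dmk_one_mem
    · intro x y _ _ px py
      rw [dmk_mul]
      exact mul_mem (mul_mem px (relProd_mem x y)) py
    · intro x _ px
      have h2 := dmk_mul (q := q) x x⁻¹
      rw [mul_inv_cancel] at h2
      have h3 : dmk A q x⁻¹ =
          (dmk A q x * phi A q (relProd A q x x⁻¹))⁻¹ * dmk A q 1 := by
        rw [h2]; group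
      rw [h3]
      exact mul_mem (inv_mem (mul_mem px (relProd_mem x x⁻¹))) dmk_one_mem
  have Ktop : K = ⊤ := by
    rw [Subgroup.eq_top_iff']
    intro x
    obtain ⟨w, rfl⟩ := PresentedGroup.mk_surjective (rels A q) x
    show phi A q w ∈ K
    refine FreeGroup.induction_on (C := fun w => phi A q w ∈ K) w ?_ ?_ ?_ ?_
    · show phi A q 1 ∈ K
      rw [map_one]; exact one_mem K
    · intro x
      cases x with
      | t g h => exact tmk_mem g h
      | d g => exact dmk_mem g
    · intro x px; rw [map_inv]; exact inv_mem px
    · intro x y px py; rw [map_mul]; exact mul_mem px py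
  refine Group.fg_iff.mpr ⟨Gset, hK ▸ Ktop, ?_⟩
  exact ((hSfin.prod hSfin).image _).union (hSfin.image _)
end
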